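/- Let S be a finite set of j products, each with a nonnegative price r_i, and let φ be a choice model satisfying weak rationality (φ(i, A) ≥ φ(i, A ∪ {x}) for all i ∈ A, x ∉ A). Let S^r be a random multiset of j products sampled independently and uniformly with replacement from S, and let R(A) = Σ_{i∈A} r_i φ(i,A) denote expected revenue. Then E[R(S^r)] ≥ (1 - (1-1/j)^j) · R(S) ≥ (1 - 1/e) · R(S). -/

import Mathlib

open Finset

/-- Expected revenue of an assortment. -/
noncomputable def revenue {N : Type} [DecidableEq N]
    (r : N → ℝ) (φ : N → Finset N → ℝ) (A : Finset N) : ℝ :=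
  ∑ i ∈ A, r i * φ i A

lemma phi_union_le {N : Type} [DecidableEq N] (φ : N → Finset N → ℝ)
    (hweak : ∀ (A : Finset N) (i x : N), i ∈ A → x ∉ A →
      φ i (insert x A) ≤ φ i A) :
    ∀ (C A : Finset N) (i : N), i ∈ A → Disjoint A C → φ i (A ∪ C) ≤ φ i A := by
  intro C
  induction C using Finset.induction_on with
  | empty => intro A i hi _; simp
  | @insert x s hx ih =>
    intro A i hi hdisj
    have hxA : x ∉ A := fun h => (Finset.disjoint_left.mp hdisj h) (Finset.mem_insert_self x s)
    have hdisj' : Disjoint A s := hdisj.mono_right (Finset.subset_insert x s)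
    calc φ i (A ∪ insert x s) = φ i (insert x (A ∪ s)) := by
          rw [Finset.union_insert]
      _ ≤ φ i (A ∪ s) := hweak _ i x (Finset.mem_union_left _ hi)
          (by simp [hxA, hx])
      _ ≤ φ i A := ih A i hi hdisj'

lemma phi_mono {N : Type} [DecidableEq N] (φ : N → Finset N → ℝ)
    (hweak : ∀ (A : Finset N) (i x : N), i ∈ A → x ∉ A →
      φ i (insert x A) ≤ φ i A)
    {i : N} {T S : Finset N} (hi : i ∈ T) (hTS : T ⊆ S) :
    φ i S ≤ φ i T := by
  have h := phi_union_le φ hweak (S \ T) T i hi (Finset.disjoint_sdiff)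
  rwa [Finset.union_sdiff_of_subset hTS] at h

theorem stmt_1 {N : Type} [DecidableEq N]
    (r : N → ℝ) (φ : N → Finset N → ℝ)
    (hr : ∀ i, 0 ≤ r i)
    (hφ0 : ∀ i A, 0 ≤ φ i A)
    (hφ1 : ∀ A : Finset N, ∑ i ∈ A, φ i A ≤ 1)
    (hweak : ∀ (A : Finset N) (i x : N), i ∈ A → x ∉ A →
      φ i (insert x A) ≤ φ i A)
    (S : Finset N) (j : ℕ) (hcard : S.card = j) (hj : 1 ≤ j) :
    (1 / (j : ℝ) ^ j) *
        ∑ f : Fin j → {x // x ∈ S},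
          revenue r φ (Finset.image (fun i => (f i : N)) Finset.univ)
      ≥ (1 - (1 - 1 / (j : ℝ)) ^ j) * revenue r φ S ∧
    (1 / (j : ℝ) ^ j) *
        ∑ f : Fin j → {x // x ∈ S},
          revenue r φ (Finset.image (fun i => (f i : N)) Finset.univ)
      ≥ (1 - 1 / Real.exp 1) * revenue r φ S := by
  have hjpos : 0 < j := hj
  have hj0 : (0:ℝ) < (j:ℝ) := by exact_mod_cast hjpos
  -- per-sample lower bound
  have key : ∀ f : Fin j → {x // x ∈ S},
      ∑ i ∈ S, (if i ∈ Finset.image (fun k => (f k : N)) Finset.univ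
        then r i * φ i S else 0)
      ≤ revenue r φ (Finset.image (fun k => (f k : N)) Finset.univ) := by
    intro f
    set T := Finset.image (fun k => (f k : N)) Finset.univ with hT
    have hTS : T ⊆ S := by
      intro a ha
      simp only [hT, Finset.mem_image] at ha
      obtain ⟨k, _, rfl⟩ := ha
      exact (f k).2
    rw [Finset.sum_ite_mem, Finset.inter_eq_right.mpr hTS]
    apply Finset.sum_le_sum
    intro i hi
    exact mul_le_mul_of_nonneg_left (phi_mono φ hweak hi hTS) (hr i)
  -- the count
  have hcount : ∀ i ∈ S,
      (Finset.univ.filter (fun f : Fin j → {x // x ∈ S} =>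
        i ∈ Finset.image (fun k => (f k : N)) Finset.univ)).card
      = j ^ j - (j - 1) ^ j := by
    intro i hi
    have hneg : (Finset.univ.filter (fun f : Fin j → {x // x ∈ S} =>
        ¬ i ∈ Finset.image (fun k => (f k : N)) Finset.univ))
        = Fintype.piFinset (fun _ : Fin j =>
            Finset.univ.filter (fun a : {x // x ∈ S} => (a : N) ≠ i)) := by
      ext f
      simp [Fintype.mem_piFinset]
    have hcardsub : Fintype.card {x // x ∈ S} = j := by
      rw [Fintype.card_coe, hcard]
    have hfiltercard :
        (Finset.univ.filter (fun a : {x // x ∈ S} => (a : N) ≠ i)).card = j - 1 := by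
      have : (Finset.univ.filter (fun a : {x // x ∈ S} => (a : N) ≠ i))
          = Finset.univ.erase ⟨i, hi⟩ := by
        ext a
        simp [Subtype.ext_iff]
      rw [this, Finset.card_erase_of_mem (Finset.mem_univ _), Finset.card_univ, hcardsub]
    have hnegcard : (Finset.univ.filter (fun f : Fin j → {x // x ∈ S} =>
        ¬ i ∈ Finset.image (fun k => (f k : N)) Finset.univ)).card = (j - 1) ^ j := by
      rw [hneg, Fintype.card_piFinset, Finset.prod_const, hfiltercard,
        Finset.card_univ, Fintype.card_fin]
    have htotal : (Finset.univ : Finset (Fin j → {x // x ∈ S})).card = j ^ j := by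
      rw [Finset.card_univ, Fintype.card_fun, hcardsub, Fintype.card_fin]
    have hsplit := Finset.card_filter_add_card_filter_not
      (s := (Finset.univ : Finset (Fin j → {x // x ∈ S})))
      (fun f : Fin j → {x // x ∈ S} =>
        i ∈ Finset.image (fun k => (f k : N)) Finset.univ)
    rw [hnegcard, htotal] at hsplit
    exact Nat.eq_sub_of_add_eq hsplit
  -- sum over samples
  have hsum : ((j ^ j - (j-1) ^ j : ℕ) : ℝ) * revenue r φ S
      ≤ ∑ f : Fin j → {x // x ∈ S},
          revenue r φ (Finset.image (fun k => (f k : N)) Finset.univ) := by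
    calc ((j ^ j - (j-1) ^ j : ℕ) : ℝ) * revenue r φ S
        = ∑ i ∈ S, ((j ^ j - (j-1) ^ j : ℕ) : ℝ) * (r i * φ i S) := by
          rw [revenue, Finset.mul_sum]
      _ = ∑ i ∈ S, ∑ f : Fin j → {x // x ∈ S},
            (if i ∈ Finset.image (fun k => (f k : N)) Finset.univ
              then r i * φ i S else 0) := by
          apply Finset.sum_congr rfl
          intro i hi
          rw [← Finset.sum_filter, Finset.sum_const, hcount i hi, nsmul_eq_mul]
      _ = ∑ f : Fin j → {x // x ∈ S}, ∑ i ∈ S,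
            (if i ∈ Finset.image (fun k => (f k : N)) Finset.univ
              then r i * φ i S else 0) := Finset.sum_comm
      _ ≤ _ := Finset.sum_le_sum (fun f _ => key f)
  -- rewrite the constant
  have hle : (j-1) ^ j ≤ j ^ j := Nat.pow_le_pow_left (Nat.sub_le j 1) j
  have hconst : ((j ^ j - (j-1) ^ j : ℕ) : ℝ) = (1 - (1 - 1 / (j:ℝ)) ^ j) * (j:ℝ) ^ j := by
    have hjne : (j:ℝ) ≠ 0 := hj0.ne'
    rw [Nat.cast_sub hle, Nat.cast_pow, Nat.cast_pow, Nat.cast_sub hj, Nat.cast_one]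
    field_simp
    rw [div_pow, mul_sub, mul_one, mul_div_cancel₀ _ (pow_ne_zero _ hjne)]
  have hRnn : 0 ≤ revenue r φ S := by
    apply Finset.sum_nonneg
    intro i _
    exact mul_nonneg (hr i) (hφ0 i S)
  have hjjpos : (0:ℝ) < (j:ℝ) ^ j := by positivity
  have hmain : (1 / (j : ℝ) ^ j) *
      ∑ f : Fin j → {x // x ∈ S},
        revenue r φ (Finset.image (fun i => (f i : N)) Finset.univ)
      ≥ (1 - (1 - 1 / (j : ℝ)) ^ j) * revenue r φ S := by
    rw [ge_iff_le, ← sub_nonneg]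
    have h1 : (1 - (1 - 1 / (j : ℝ)) ^ j) * revenue r φ S
        = (1 / (j:ℝ)^j) * (((j ^ j - (j-1) ^ j : ℕ) : ℝ) * revenue r φ S) := by
      rw [hconst]
      field_simp
    rw [h1, ← mul_sub]
    apply mul_nonneg (by positivity)
    linarith [hsum]
  refine ⟨hmain, le_trans ?_ hmain⟩
  -- (1 - 1/e) ≤ 1 - (1-1/j)^j
  apply mul_le_mul_of_nonneg_right _ hRnn
  have h1j : 1 / (j:ℝ) ≤ 1 := by
    rw [div_le_one hj0]
    exact_mod_cast hj
  have h0 : 0 ≤ 1 - 1 / (j:ℝ) := by linarith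
  have hexp : (1 - 1 / (j:ℝ)) ≤ Real.exp (-(1 / (j:ℝ))) := by
    have := Real.add_one_le_exp (-(1 / (j:ℝ)))
    linarith
  have hpow : (1 - 1 / (j:ℝ)) ^ j ≤ Real.exp (-(1 / (j:ℝ))) ^ j :=
    pow_le_pow_left₀ h0 hexp j
  have hexppow : Real.exp (-(1 / (j:ℝ))) ^ j = Real.exp (-1) := by
    rw [← Real.exp_nat_mul]
    congr 1
    field_simp
  rw [hexppow] at hpow
  rw [Real.exp_neg, ← one_div] at hpow
  linarith [hpow]
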